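/- arXiv:1409.8637 — 3 statements merged into one kernel-verified Lean document; each statement's English description precedes it below -/
import Mathlib

section
/- Let (M, A) be a d-dimensional BUT-manifold. Suppose {B_i, B_{-i}}, i = 1, ..., d+1, with B_{-i} := A(B_i), is a family of closed sets covering M such that B_i ∩ B_{-i} = ∅ for all i. Then for every choice of indices k_1, ..., k_{d+1} with |k_i| = i, the intersection B_{k_1} ∩ B_{k_2} ∩ ... ∩ B_{k_{d+1}} is nonempty. -/
open Set Metric Geometry

noncomputable section

abbrev Euc (n : ℕ) : Type := EuclideanSpace ℝ (Fin n)

def IsFreeInvolutionOn {E : Type} [TopologicalSpace E] (A : E → E) (M : Set E) : Prop :=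
  Set.MapsTo A M M ∧ ContinuousOn A M ∧ (∀ x ∈ M, A (A x) = x) ∧ (∀ x ∈ M, A x ≠ x)

/-- `M` is a closed (compact, connected, boundaryless) topological `d`-manifold. -/
def IsClosedManifoldOfDim {E : Type} [TopologicalSpace E] (d : ℕ) (M : Set E) : Prop :=
  IsCompact M ∧ IsConnected M ∧ Nonempty (ChartedSpace (Euc d) ↥M)

/-- A BUT (Borsuk--Ulam type) manifold: a closed `d`-manifold with a free involution
such that every continuous map to `ℝ^d` identifies some orbit. -/
def IsBUTManifold {E : Type} [TopologicalSpace E] (d : ℕ) (M : Set E) (A : E → E) : Prop :=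
  IsClosedManifoldOfDim d M ∧ IsFreeInvolutionOn A M ∧
    ∀ g : E → Euc d, ContinuousOn g M → ∃ x ∈ M, g (A x) = g x

/-! ### Auxiliary: a signed "Urysohn-like" function for a pair of disjoint closed sets -/

/-- Signed distance-quotient function: `1` exactly on `C`, `-1` exactly on `D`. -/
noncomputable def lam {X : Type*} [MetricSpace X] (C D : Set X) (x : X) : ℝ :=
  (infDist x D - infDist x C) / (infDist x D + infDist x C)

namespace LamAux

variable {X : Type*} [MetricSpace X] {C D : Set X} {x : X}

lemma lam_swap (C D : Set X) (x : X) : lam D C x = - lam C D x := by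
  unfold lam; rw [add_comm]; ring

lemma denom_pos (hC : IsClosed C) (hD : IsClosed D) (hdisj : C ∩ D = ∅)
    (hCne : C.Nonempty) (hDne : D.Nonempty) (x : X) :
    0 < infDist x D + infDist x C := by
  rcases lt_or_eq_of_le (add_nonneg infDist_nonneg infDist_nonneg :
      (0:ℝ) ≤ infDist x D + infDist x C) with h | h
  · exact h
  · exfalso
    have h1 : infDist x D = 0 ∧ infDist x C = 0 := by
      constructor <;> nlinarith [infDist_nonneg (x := x) (s := C),
        infDist_nonneg (x := x) (s := D)]
    have hxC : x ∈ C := (hC.mem_iff_infDist_zero hCne).2 h1.2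
    have hxD : x ∈ D := (hD.mem_iff_infDist_zero hDne).2 h1.1
    have : x ∈ C ∩ D := ⟨hxC, hxD⟩
    simp [hdisj] at this

lemma abs_lam_le (hC : IsClosed C) (hD : IsClosed D) (hdisj : C ∩ D = ∅)
    (hiff : C.Nonempty ↔ D.Nonempty) (x : X) : |lam C D x| ≤ 1 := by
  by_cases hCne : C.Nonempty
  · have hDne := hiff.1 hCne
    have hpos := denom_pos hC hD hdisj hCne hDne x
    rw [lam, abs_div, abs_of_pos hpos, div_le_one hpos]
    have h1 := infDist_nonneg (x := x) (s := C)
    have h2 := infDist_nonneg (x := x) (s := D)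
    rw [abs_le]; constructor <;> nlinarith
  · have hDne : ¬ D.Nonempty := fun h => hCne (hiff.2 h)
    rw [Set.not_nonempty_iff_eq_empty] at hCne hDne
    simp [lam, hCne, hDne, infDist_empty]

lemma lam_eq_one_of_mem (hC : IsClosed C) (hD : IsClosed D) (hdisj : C ∩ D = ∅)
    (hiff : C.Nonempty ↔ D.Nonempty) (hx : x ∈ C) : lam C D x = 1 := by
  have hCne : C.Nonempty := ⟨x, hx⟩
  have hDne := hiff.1 hCne
  have hpos := denom_pos hC hD hdisj hCne hDne x
  have hzero : infDist x C = 0 := infDist_zero_of_mem hx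
  rw [hzero, add_zero] at hpos
  rw [lam, hzero, sub_zero, add_zero, div_self (ne_of_gt hpos)]

lemma mem_of_lam_eq_one (hC : IsClosed C) (hD : IsClosed D) (hdisj : C ∩ D = ∅)
    (hiff : C.Nonempty ↔ D.Nonempty) (h : lam C D x = 1) : x ∈ C := by
  by_cases hCne : C.Nonempty
  · have hDne := hiff.1 hCne
    have hpos := denom_pos hC hD hdisj hCne hDne x
    rw [lam, div_eq_one_iff_eq (ne_of_gt hpos)] at h
    have h0 : infDist x C = 0 := by linarith
    exact (hC.mem_iff_infDist_zero hCne).2 h0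
  · exfalso
    have hDne : ¬ D.Nonempty := fun hh => hCne (hiff.2 hh)
    rw [Set.not_nonempty_iff_eq_empty] at hCne hDne
    rw [lam, hCne, hDne] at h
    simp [infDist_empty] at h

lemma lam_continuous (hC : IsClosed C) (hD : IsClosed D) (hdisj : C ∩ D = ∅)
    (hiff : C.Nonempty ↔ D.Nonempty) : Continuous (lam C D) := by
  by_cases hCne : C.Nonempty
  · have hDne := hiff.1 hCne
    exact Continuous.div
      ((continuous_infDist_pt D).sub (continuous_infDist_pt C))
      ((continuous_infDist_pt D).add (continuous_infDist_pt C))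
      (fun x => ne_of_gt (denom_pos hC hD hdisj hCne hDne x))
  · have hDne : ¬ D.Nonempty := fun hh => hCne (hiff.2 hh)
    rw [Set.not_nonempty_iff_eq_empty] at hCne hDne
    have : lam C D = fun _ => (0:ℝ) := by
      funext y; simp [lam, hCne, hDne, infDist_empty]
    rw [this]; exact continuous_const

end LamAux

/-- **Tucker's first covering theorem for BUT-manifolds.** Let `(M, A)` be a
`d`-dimensional BUT-manifold covered by closed sets `B 0, …, B d` together with their
images `A '' B i`, with `B i ∩ A '' B i = ∅`. Then for every choice of one set from
each pair `{B i, A '' B i}`, the chosen sets have a common point. -/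
theorem covering_theorem_one (d N : ℕ) (M : Set (Euc N)) (A : Euc N → Euc N)
    (hBUT : IsBUTManifold d M A)
    (B : Fin (d + 1) → Set (Euc N))
    (hclosed : ∀ i, IsClosed (B i)) (hsub : ∀ i, B i ⊆ M)
    (hdisj : ∀ i, B i ∩ A '' B i = ∅)
    (hcover : M ⊆ ⋃ i, (B i ∪ A '' B i)) :
    ∀ ε : Fin (d + 1) → Bool,
      (⋂ i, if ε i then B i else A '' B i).Nonempty := by
  intro ε
  obtain ⟨⟨hMcpt, hMconn, _⟩, ⟨hmaps, hAcont, hAA, hAfree⟩, hBU⟩ := hBUT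
  -- the chosen sets and their partners
  set C : Fin (d + 1) → Set (Euc N) := fun i => if ε i then B i else A '' B i with hCdef
  set D : Fin (d + 1) → Set (Euc N) := fun i => if ε i then A '' B i else B i with hDdef
  -- basic facts
  have hBcpt : ∀ i, IsCompact (B i) := fun i => hMcpt.of_isClosed_subset (hclosed i) (hsub i)
  have hAim_cpt : ∀ i, IsCompact (A '' B i) := fun i =>
    (hBcpt i).image_of_continuousOn (hAcont.mono (hsub i))
  have hAim_closed : ∀ i, IsClosed (A '' B i) := fun i => (hAim_cpt i).isClosed
  have hAim_sub : ∀ i, A '' B i ⊆ M := fun i =>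
    (Set.image_mono (f := A) (hsub i)).trans (Set.image_subset_iff.2 hmaps)
  have hCclosed : ∀ i, IsClosed (C i) := by
    intro i; by_cases h : ε i <;> simp [hCdef, h, hclosed i, hAim_closed i]
  have hDclosed : ∀ i, IsClosed (D i) := by
    intro i; by_cases h : ε i <;> simp [hDdef, h, hclosed i, hAim_closed i]
  have hCDdisj : ∀ i, C i ∩ D i = ∅ := by
    intro i; by_cases h : ε i
    · simpa [hCdef, hDdef, h] using hdisj i
    · simp only [hCdef, hDdef, h, if_false]
      rw [Set.inter_comm]; exact hdisj i
  have hCDiff : ∀ i, (C i).Nonempty ↔ (D i).Nonempty := by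
    intro i; by_cases h : ε i <;>
      simp [hCdef, hDdef, h, Set.image_nonempty]
  have hCsub : ∀ i, C i ⊆ M := by
    intro i; by_cases h : ε i <;> simp [hCdef, h, hsub i, hAim_sub i]
  have hDsub : ∀ i, D i ⊆ M := by
    intro i; by_cases h : ε i <;> simp [hDdef, h, hsub i, hAim_sub i]
  -- swapping under the involution
  have himg_mem : ∀ i, ∀ x, x ∈ A '' B i → A x ∈ B i := by
    intro i x hx
    obtain ⟨b, hb, rfl⟩ := hx
    rw [hAA b (hsub i hb)]; exact hb
  have hswapCD : ∀ i, ∀ x, x ∈ C i → A x ∈ D i := by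
    intro i x hx
    by_cases h : ε i
    · simp only [hCdef, h, if_true] at hx
      simp only [hDdef, h, if_true]
      exact Set.mem_image_of_mem A hx
    · simp only [hCdef, h, if_false] at hx
      simp only [hDdef, h, if_false]
      exact himg_mem i x hx
  have hswapDC : ∀ i, ∀ x, x ∈ D i → A x ∈ C i := by
    intro i x hx
    by_cases h : ε i
    · simp only [hDdef, h, if_true] at hx
      simp only [hCdef, h, if_true]
      exact himg_mem i x hx
    · simp only [hDdef, h, if_false] at hx
      simp only [hCdef, h, if_false]
      exact Set.mem_image_of_mem A hx
  -- disjointness swapped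
  have hDCdisj : ∀ i, D i ∩ C i = ∅ := by
    intro i; rw [Set.inter_comm]; exact hCDdisj i
  have hDCiff : ∀ i, (D i).Nonempty ↔ (C i).Nonempty := fun i => (hCDiff i).symm
  -- the lambda functions and s functions
  set L : Fin (d + 1) → Euc N → ℝ := fun i => lam (C i) (D i) with hLdef
  set s : Fin (d + 1) → Euc N → ℝ := fun i x => L i x - L i (A x) with hsdef
  -- properties
  have hLabs : ∀ i x, |L i x| ≤ 1 := fun i x =>
    LamAux.abs_lam_le (hCclosed i) (hDclosed i) (hCDdisj i) (hCDiff i) x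
  have hLone : ∀ i x, x ∈ C i → L i x = 1 := fun i x hx =>
    LamAux.lam_eq_one_of_mem (hCclosed i) (hDclosed i) (hCDdisj i) (hCDiff i) hx
  have hLnegone : ∀ i x, x ∈ D i → L i x = -1 := by
    intro i x hx
    have := LamAux.lam_eq_one_of_mem (hDclosed i) (hCclosed i) (hDCdisj i) (hDCiff i) hx
    rw [LamAux.lam_swap] at this
    linarith [this]
  have hmemone : ∀ i x, L i x = 1 → x ∈ C i := fun i x h =>
    LamAux.mem_of_lam_eq_one (hCclosed i) (hDclosed i) (hCDdisj i) (hCDiff i) h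
  have hLcont : ∀ i, Continuous (L i) := fun i =>
    LamAux.lam_continuous (hCclosed i) (hDclosed i) (hCDdisj i) (hCDiff i)
  -- s values on C and D
  have hsC : ∀ i x, x ∈ M → x ∈ C i → s i x = 2 := by
    intro i x hxM hx
    have h1 := hLone i x hx
    have h2 := hLnegone i (A x) (hswapCD i x hx)
    simp only [hsdef]; rw [h1, h2]; norm_num
  have hsD : ∀ i x, x ∈ M → x ∈ D i → s i x = -2 := by
    intro i x hxM hx
    have h1 := hLnegone i x hx
    have h2 := hLone i (A x) (hswapDC i x hx)
    simp only [hsdef]; rw [h1, h2]; norm_num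
  have hsmemC : ∀ i x, s i x = 2 → x ∈ C i := by
    intro i x h
    apply hmemone i x
    have h1 := hLabs i x
    have h2 := hLabs i (A x)
    simp only [hsdef] at h
    rw [abs_le] at h1 h2
    linarith
  have hsmemC' : ∀ i x, s i x = -2 → A x ∈ C i := by
    intro i x h
    apply hmemone i (A x)
    have h1 := hLabs i x
    have h2 := hLabs i (A x)
    simp only [hsdef] at h
    rw [abs_le] at h1 h2
    linarith
  -- suppose the intersection is empty
  by_contra hne
  -- build the test map into ℝ^d
  set g : Euc N → Euc d := fun x =>
    (EuclideanSpace.equiv (Fin d) ℝ).symm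
      (fun i => s i.castSucc x - s (Fin.last d) x) with hgdef
  have hscont : ∀ i, ContinuousOn (s i) M := by
    intro i
    exact ((hLcont i).continuousOn).sub ((hLcont i).comp_continuousOn hAcont)
  have hgcont : ContinuousOn g M := by
    apply ((EuclideanSpace.equiv (Fin d) ℝ).symm.continuous).comp_continuousOn
    apply continuousOn_pi.2
    intro i
    exact (hscont i.castSucc).sub (hscont (Fin.last d))
  obtain ⟨x, hxM, hgx⟩ := hBU g hgcont
  -- unpack the coincidence
  have hcoord : ∀ i : Fin d,
      s i.castSucc (A x) - s (Fin.last d) (A x) = s i.castSucc x - s (Fin.last d) x := by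
    intro i
    have := congrArg (EuclideanSpace.equiv (Fin d) ℝ) hgx
    simp only [hgdef, ContinuousLinearEquiv.apply_symm_apply] at this
    exact congrFun this i
  have hsA : ∀ i, s i (A x) = - s i x := by
    intro i
    simp only [hsdef]
    rw [hAA x hxM]
    ring
  have hall : ∀ i : Fin (d + 1), s i x = s (Fin.last d) x := by
    intro i
    refine Fin.lastCases rfl (fun j => ?_) i
    have h := hcoord j
    rw [hsA, hsA] at h
    linarith
  -- use the covering
  obtain ⟨U, ⟨j₀, rfl⟩, hxU⟩ := hcover hxM
  have hxCD : x ∈ C j₀ ∪ D j₀ := by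
    by_cases h : ε j₀
    · simpa [hCdef, hDdef, h] using hxU
    · simp only [hCdef, hDdef, h, if_false]
      rw [Set.union_comm]; exact hxU
  rcases hxCD with hxC | hxD
  · -- all s i x = 2, so x is in every C i
    have h2 : s (Fin.last d) x = 2 := (hall j₀).symm.trans (hsC j₀ x hxM hxC)
    have hxall : ∀ i, x ∈ C i := fun i => hsmemC i x ((hall i).trans h2)
    exact hne ⟨x, Set.mem_iInter.2 hxall⟩
  · -- all s i x = -2, so A x is in every C i
    have h2 : s (Fin.last d) x = -2 := (hall j₀).symm.trans (hsD j₀ x hxM hxD)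
    have hxall : ∀ i, A x ∈ C i := fun i => hsmemC' i x ((hall i).trans h2)
    exact hne ⟨A x, Set.mem_iInter.2 hxall⟩
end
end

section
/- Let (M, A) be a d-dimensional BUT-manifold covered by d+2 closed subsets C_1, ..., C_{d+2}, each satisfying C_i ∩ A(C_i) = ∅. Then for every 0 < k < d+2 and every k of these subsets, there exists x ∈ M lying in the intersection of those k subsets with A(x) lying in the intersection of the remaining d+2-k subsets. -/
open Set Metric Geometry

noncomputable section

/-- **Tucker's second covering theorem for BUT-manifolds.** Let `(M, A)` be a
`d`-dimensional BUT-manifold covered by `d + 2` closed subsets `C i`, each with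
`C i ∩ A '' C i = ∅`. Then for every `0 < k < d + 2` and every `k` of the subsets there
is `x ∈ M` in the intersection of those `k` subsets with `A x` in the intersection of
the remaining `d + 2 - k` subsets. -/
theorem covering_theorem_two (d N : ℕ) (M : Set (Euc N)) (A : Euc N → Euc N)
    (hBUT : IsBUTManifold d M A)
    (C : Fin (d + 2) → Set (Euc N))
    (hclosed : ∀ i, IsClosed (C i)) (hsub : ∀ i, C i ⊆ M)
    (hcover : M ⊆ ⋃ i, C i)
    (hdisj : ∀ i, C i ∩ A '' C i = ∅) :
    ∀ s : Finset (Fin (d + 2)), 0 < s.card → s.card < d + 2 →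
      ∃ x ∈ M, (∀ i ∈ s, x ∈ C i) ∧ ∀ i ∉ s, A x ∈ C i := by
  obtain ⟨-, ⟨hmaps, hAcont, hAA, -⟩, hbut⟩ := hBUT
  set T := EuclideanSpace.equiv (Fin d) ℝ with hT
  -- basic consequences of disjointness
  have hd : ∀ i, ∀ y, y ∈ C i → A y ∈ C i → False := by
    intro i y h1 h2
    have : A y ∈ C i ∩ A '' C i := ⟨h2, ⟨y, h1, rfl⟩⟩
    rw [hdisj i] at this
    exact this
  -- membership from zero distance, given nonemptiness
  have memlem : ∀ (i : Fin (d + 2)), (C i).Nonempty → ∀ y, infDist y (C i) = 0 → y ∈ C i := by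
    intro i hne y h0
    have := (Metric.mem_closure_iff_infDist_zero hne).mpr h0
    rwa [(hclosed i).closure_eq] at this
  -- continuity of distance functions
  have hFcont : ∀ i : Fin (d + 2), ContinuousOn (fun x => infDist x (C i)) M :=
    fun i => (Metric.continuous_infDist_pt (C i)).continuousOn
  have hFAcont : ∀ i : Fin (d + 2), ContinuousOn (fun x => infDist (A x) (C i)) M :=
    fun i => (Metric.continuous_infDist_pt (C i)).comp_continuousOn hAcont
  -- every C i is nonempty (Lusternik-Schnirelmann type argument)
  have hne : ∀ i, (C i).Nonempty := by
    intro m0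
    by_contra hempty
    have hC0 : C m0 = ∅ := Set.not_nonempty_iff_eq_empty.mp hempty
    have hm0univ : m0 ∈ (Finset.univ : Finset (Fin (d + 2))) := Finset.mem_univ _
    have hcard1 : (Finset.univ.erase m0).card = d + 1 := by
      rw [Finset.card_erase_of_mem hm0univ, Finset.card_univ, Fintype.card_fin]
      omega
    obtain ⟨j₁, hj₁⟩ : (Finset.univ.erase m0).Nonempty := by
      rw [← Finset.card_pos, hcard1]; omega
    set u' : Finset (Fin (d + 2)) := (Finset.univ.erase m0).erase j₁ with hu'
    have hcard' : u'.card = d := by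
      rw [hu', Finset.card_erase_of_mem hj₁, hcard1]
      omega
    set e := Finset.equivFinOfCardEq hcard' with he
    set g : Euc N → Euc d := fun x => T.symm (fun r => infDist x (C ((e.symm r) : Fin (d + 2)))) with hg
    have hgcont : ContinuousOn g M := by
      apply T.symm.continuous.comp_continuousOn
      exact continuousOn_pi.mpr fun r => hFcont _
    obtain ⟨x₀, hx₀, hco⟩ := hbut g hgcont
    have hcomp : ∀ i ∈ u', infDist (A x₀) (C i) = infDist x₀ (C i) := by
      intro i hi
      have h1 : (fun r => infDist (A x₀) (C ((e.symm r) : Fin (d + 2))))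
          = (fun r => infDist x₀ (C ((e.symm r) : Fin (d + 2)))) := T.symm.injective hco
      have h2 := congrFun h1 (e ⟨i, hi⟩)
      simpa using h2
    -- x₀ lies in some C a
    obtain ⟨a, ha⟩ : ∃ a, x₀ ∈ C a := by
      have := hcover hx₀; rwa [Set.mem_iUnion] at this
    obtain ⟨b, hb⟩ : ∃ b, A x₀ ∈ C b := by
      have := hcover (hmaps hx₀); rwa [Set.mem_iUnion] at this
    have hau : a ∉ u' := by
      intro hau
      have h0 : infDist x₀ (C a) = 0 := infDist_zero_of_mem ha
      have h1 : infDist (A x₀) (C a) = 0 := by rw [hcomp a hau, h0]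
      exact hd a x₀ ha (memlem a ⟨x₀, ha⟩ _ h1)
    have hbu : b ∉ u' := by
      intro hbu
      have h0 : infDist (A x₀) (C b) = 0 := infDist_zero_of_mem hb
      have h1 : infDist x₀ (C b) = 0 := by rw [← hcomp b hbu, h0]
      have hx₀b : x₀ ∈ C b := memlem b ⟨A x₀, hb⟩ _ h1
      exact hd b (A x₀) hb (by rwa [hAA x₀ hx₀])
    have ham0 : a ≠ m0 := by intro h; rw [h, hC0] at ha; exact ha
    have hbm0 : b ≠ m0 := by intro h; rw [h, hC0] at hb; exact hb
    have haj : a = j₁ := by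
      by_contra h
      exact hau (Finset.mem_erase.mpr ⟨h, Finset.mem_erase.mpr ⟨ham0, Finset.mem_univ _⟩⟩)
    have hbj : b = j₁ := by
      by_contra h
      exact hbu (Finset.mem_erase.mpr ⟨h, Finset.mem_erase.mpr ⟨hbm0, Finset.mem_univ _⟩⟩)
    exact hd j₁ x₀ (haj ▸ ha) (hbj ▸ hb)
  -- key positivity of denominators
  have key : ∀ (i : Fin (d + 2)), ∀ x ∈ M, 0 < infDist x (C i) + infDist (A x) (C i) := by
    intro i x hx
    have h1 : (0 : ℝ) ≤ infDist x (C i) := infDist_nonneg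
    have h2 : (0 : ℝ) ≤ infDist (A x) (C i) := infDist_nonneg
    rcases h1.lt_or_eq with hpos | hzero
    · linarith
    · have hxC : x ∈ C i := memlem i (hne i) x hzero.symm
      have hAx : infDist (A x) (C i) ≠ 0 := fun h0 => hd i x hxC (memlem i (hne i) _ h0)
      have : 0 < infDist (A x) (C i) := lt_of_le_of_ne h2 (Ne.symm hAx)
      linarith
  -- the odd function w
  set w : Fin (d + 2) → Euc N → ℝ := fun i x =>
    (infDist x (C i) - infDist (A x) (C i)) / (infDist x (C i) + infDist (A x) (C i)) with hw
  have hwcont : ∀ i, ContinuousOn (w i) M := by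
    intro i
    exact ((hFcont i).sub (hFAcont i)).div ((hFcont i).add (hFAcont i))
      (fun x hx => ne_of_gt (key i x hx))
  have hwodd : ∀ i, ∀ x ∈ M, w i (A x) = -(w i x) := by
    intro i x hx
    simp only [hw]
    rw [hAA x hx]
    ring
  have hw_of_mem : ∀ i, ∀ x ∈ M, x ∈ C i → w i x = -1 := by
    intro i x hx hxc
    have ha : infDist x (C i) = 0 := infDist_zero_of_mem hxc
    have hden := key i x hx
    rw [ha] at hden
    simp only [hw]
    rw [ha, zero_sub, zero_add, neg_div, div_self (ne_of_gt (by linarith))]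
  have hw_of_memA : ∀ i, ∀ x ∈ M, A x ∈ C i → w i x = 1 := by
    intro i x hx hxc
    have hb : infDist (A x) (C i) = 0 := infDist_zero_of_mem hxc
    have hden := key i x hx
    rw [hb] at hden
    simp only [hw]
    rw [hb, sub_zero, add_zero, div_self (ne_of_gt (by linarith))]
  have hmem_of_wneg : ∀ i, ∀ x ∈ M, w i x = -1 → x ∈ C i := by
    intro i x hx hw1
    have hden := key i x hx
    simp only [hw] at hw1
    rw [div_eq_iff (ne_of_gt hden)] at hw1
    have h2 : (0:ℝ) ≤ infDist (A x) (C i) := infDist_nonneg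
    have : infDist x (C i) = 0 := by linarith [hw1]
    exact memlem i (hne i) x this
  have hmemA_of_wpos : ∀ i, ∀ x ∈ M, w i x = 1 → A x ∈ C i := by
    intro i x hx hw1
    have hden := key i x hx
    simp only [hw] at hw1
    rw [div_eq_iff (ne_of_gt hden)] at hw1
    have : infDist (A x) (C i) = 0 := by linarith [hw1]
    exact memlem i (hne i) _ this
  -- main argument
  intro s hk1 hk2
  obtain ⟨i₀, hi₀⟩ : s.Nonempty := Finset.card_pos.mp hk1
  obtain ⟨j₀, hj₀⟩ : (sᶜ : Finset (Fin (d + 2))).Nonempty := by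
    rw [← Finset.card_pos, Finset.card_compl, Fintype.card_fin]; omega
  set base : Fin (d + 2) → Fin (d + 2) := fun i => if i ∈ s then i₀ else j₀ with hbase
  set h : Fin (d + 2) → Euc N → ℝ := fun i x => w i x - w (base i) x with hh
  set u : Finset (Fin (d + 2)) := (s.erase i₀) ∪ (sᶜ.erase j₀) with hu
  have hdisj_u : Disjoint (s.erase i₀) (sᶜ.erase j₀) :=
    (disjoint_compl_right).mono (Finset.erase_subset _ _) (Finset.erase_subset _ _)
  have hcard_u : u.card = d := by
    rw [hu, Finset.card_union_of_disjoint hdisj_u, Finset.card_erase_of_mem hi₀,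
      Finset.card_erase_of_mem hj₀, Finset.card_compl, Fintype.card_fin]
    omega
  set e := Finset.equivFinOfCardEq hcard_u with he
  set g : Euc N → Euc d := fun x => T.symm (fun r => h ((e.symm r) : Fin (d + 2)) x) with hg
  have hgcont : ContinuousOn g M := by
    apply T.symm.continuous.comp_continuousOn
    exact continuousOn_pi.mpr fun r => (hwcont _).sub (hwcont _)
  obtain ⟨x₀, hx₀, hco⟩ := hbut g hgcont
  have hAx₀ : A x₀ ∈ M := hmaps hx₀
  have hzero : ∀ i ∈ u, h i x₀ = 0 := by
    intro i hi
    have h1 : (fun r => h ((e.symm r) : Fin (d + 2)) (A x₀))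
        = (fun r => h ((e.symm r) : Fin (d + 2)) x₀) := T.symm.injective hco
    have h2 := congrFun h1 (e ⟨i, hi⟩)
    simp only [Equiv.symm_apply_apply] at h2
    have h3 : h i (A x₀) = -(h i x₀) := by
      simp only [hh]
      rw [hwodd i x₀ hx₀, hwodd (base i) x₀ hx₀]
      ring
    rw [h3] at h2
    linarith
  have hs_const : ∀ i ∈ s, w i x₀ = w i₀ x₀ := by
    intro i hi
    by_cases hii : i = i₀
    · rw [hii]
    · have hiu : i ∈ u := Finset.mem_union_left _ (Finset.mem_erase.mpr ⟨hii, hi⟩)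
      have := hzero i hiu
      simp only [hh, hbase, if_pos hi] at this
      linarith
  have ht_const : ∀ i ∉ s, w i x₀ = w j₀ x₀ := by
    intro i hi
    by_cases hii : i = j₀
    · rw [hii]
    · have hiu : i ∈ u :=
        Finset.mem_union_right _ (Finset.mem_erase.mpr ⟨hii, Finset.mem_compl.mpr hi⟩)
      have := hzero i hiu
      simp only [hh, hbase, if_neg hi] at this
      linarith
  obtain ⟨m, hm⟩ : ∃ m, x₀ ∈ C m := by
    have := hcover hx₀; rwa [Set.mem_iUnion] at this
  obtain ⟨m', hm'⟩ : ∃ m', A x₀ ∈ C m' := by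
    have := hcover hAx₀; rwa [Set.mem_iUnion] at this
  have hwm : w m x₀ = -1 := hw_of_mem m x₀ hx₀ hm
  have hwm' : w m' x₀ = 1 := hw_of_memA m' x₀ hx₀ hm'
  by_cases hms : m ∈ s <;> by_cases hm's : m' ∈ s
  · -- both in s : contradiction
    exfalso
    have e1 := hs_const m hms
    have e2 := hs_const m' hm's
    rw [hwm] at e1; rw [hwm'] at e2
    linarith
  · -- m ∈ s, m' ∉ s : x₀ works
    refine ⟨x₀, hx₀, ?_, ?_⟩
    · intro i hi
      apply hmem_of_wneg i x₀ hx₀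
      rw [hs_const i hi, ← hs_const m hms, hwm]
    · intro i hi
      apply hmemA_of_wpos i x₀ hx₀
      rw [ht_const i hi, ← ht_const m' hm's, hwm']
  · -- m ∉ s, m' ∈ s : A x₀ works
    refine ⟨A x₀, hAx₀, ?_, ?_⟩
    · intro i hi
      apply hmemA_of_wpos i x₀ hx₀
      rw [hs_const i hi, ← hs_const m' hm's, hwm']
    · intro i hi
      rw [hAA x₀ hx₀]
      apply hmem_of_wneg i x₀ hx₀
      rw [ht_const i hi, ← ht_const m hms, hwm]
  · -- both ∉ s : contradiction
    exfalso
    have e1 := ht_const m hms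
    have e2 := ht_const m' hm's
    rw [hwm] at e1; rw [hwm'] at e2
    linarith
end
end

section
/- Let (M, A) be a d-dimensional BUT-manifold. Then M cannot be covered by d+1 closed sets none of which contains a pair of points {x, A(x)}. -/
open Set Metric Geometry

noncomputable section

/-- **Lusternik–Schnirelmann for BUT-manifolds.** A `d`-dimensional BUT-manifold
`(M, A)` cannot be covered by `d + 1` closed sets none of which contains a pair
`{x, A x}`: in any such closed cover some set contains an orbit. -/
theorem lusternik_schnirelmann_BUT (d N : ℕ) (M : Set (Euc N)) (A : Euc N → Euc N)
    (hBUT : IsBUTManifold d M A)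
    (C : Fin (d + 1) → Set (Euc N))
    (hclosed : ∀ i, IsClosed (C i)) (hsub : ∀ i, C i ⊆ M)
    (hcover : M ⊆ ⋃ i, C i) :
    ∃ i, ∃ x ∈ M, x ∈ C i ∧ A x ∈ C i := by
  obtain ⟨hman, hinv, hg⟩ := hBUT
  set g : Euc N → Euc d :=
    fun x => (EuclideanSpace.equiv (Fin d) ℝ).symm
      (fun i => Metric.infDist x (C i.castSucc)) with hgdef
  have hcont : Continuous g :=
    (EuclideanSpace.equiv (Fin d) ℝ).symm.continuous.comp
      (continuous_pi fun i => continuous_infDist_pt _)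
  obtain ⟨x, hxM, hgx⟩ := hg g hcont.continuousOn
  have hAxM : A x ∈ M := hinv.1 hxM
  have heq : ∀ i : Fin d,
      Metric.infDist (A x) (C i.castSucc) = Metric.infDist x (C i.castSucc) := by
    intro i
    have := congrArg (fun v : Euc d => v i) hgx
    simpa [hgdef, EuclideanSpace.equiv] using this
  by_cases h : ∃ i : Fin d, x ∈ C i.castSucc
  · obtain ⟨i, hi⟩ := h
    have h0 : Metric.infDist x (C i.castSucc) = 0 :=
      Metric.infDist_zero_of_mem hi
    have hAx : A x ∈ C i.castSucc := by
      have hne : (C i.castSucc).Nonempty := ⟨x, hi⟩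
      rw [← (hclosed i.castSucc).closure_eq]
      exact Metric.mem_closure_iff_infDist_zero hne |>.2 (by rw [heq i, h0])
    exact ⟨i.castSucc, x, hxM, hi, hAx⟩
  · push_neg at h
    have hA : ∀ i : Fin d, A x ∉ C i.castSucc := by
      intro i hAi
      have h0 : Metric.infDist x (C i.castSucc) = 0 := by
        rw [← heq i]; exact Metric.infDist_zero_of_mem hAi
      have hne : (C i.castSucc).Nonempty := ⟨A x, hAi⟩
      exact h i (by
        rw [← (hclosed i.castSucc).closure_eq]
        exact Metric.mem_closure_iff_infDist_zero hne |>.2 h0)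
    have hxlast : x ∈ C (Fin.last d) := by
      obtain ⟨j, hj⟩ := Set.mem_iUnion.1 (hcover hxM)
      rcases Fin.eq_castSucc_or_eq_last j with ⟨k, rfl⟩ | rfl
      · exact absurd hj (h k)
      · exact hj
    have hAlast : A x ∈ C (Fin.last d) := by
      obtain ⟨j, hj⟩ := Set.mem_iUnion.1 (hcover hAxM)
      rcases Fin.eq_castSucc_or_eq_last j with ⟨k, rfl⟩ | rfl
      · exact absurd hj (hA k)
      · exact hj
    exact ⟨Fin.last d, x, hxM, hxlast, hAlast⟩
end
end
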